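/- Let S: {0,1}* → ℕ be the monoid homomorphism with S(0) = a and S(1) = b where 4 ≤ a < b and gcd(a,b) = 1. Then the set ℕ \ { S(u) : u a factor of the paperfolding word } is infinite. -/

import Mathlib

/-- letter of the ordinary paperfolding word at position `m` (positions start at 1):
writing `m = k * 2^j` with `k` odd, the letter is `0` if `k ≡ 1 (mod 4)` and `1` otherwise. -/
def pf (m : ℕ) : ℕ := if (m / 2 ^ (padicValNat 2 m)) % 4 = 1 then 0 else 1

/-- the length-`n` factor of `w` starting at position `i`. -/
def factorAt (w : ℕ → ℕ) (i n : ℕ) : List ℕ := (List.range n).map (fun j => w (i + j))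

/-- `u` is a factor of the 1-indexed infinite word `w`. -/
def IsFactor (w : ℕ → ℕ) (u : List ℕ) : Prop := ∃ i ≥ 1, u = factorAt w i u.length

def fc (n : ℕ) : ℕ := ∑ i ∈ Finset.range n, pf (i+1)

lemma pf_zero_or_one (m : ℕ) : pf m = 0 ∨ pf m = 1 := by
  unfold pf; split <;> simp

lemma pf_odd (m : ℕ) : pf (2*m+1) = m % 2 := by
  have h0 : padicValNat 2 (2*m+1) = 0 := padicValNat.eq_zero_of_not_dvd (by omega)
  unfold pf
  rw [h0, pow_zero, Nat.div_one]
  by_cases hm : m % 2 = 0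
  · rw [if_pos (by omega)]; omega
  · rw [if_neg (by omega)]; omega

lemma pf_even (m : ℕ) (hm : m ≠ 0) : pf (2*m) = pf m := by
  haveI : Fact (Nat.Prime 2) := ⟨Nat.prime_two⟩
  have h1 : padicValNat 2 (2*m) = 1 + padicValNat 2 m := by
    rw [padicValNat.mul (by norm_num) hm, padicValNat.self (by norm_num)]
  unfold pf
  rw [h1]
  have h2 : 2*m / 2^(1 + padicValNat 2 m) = m / 2^(padicValNat 2 m) := by
    rw [pow_add, pow_one, Nat.mul_div_mul_left _ _ (by norm_num : 0 < 2)]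
  rw [h2]

lemma fc_succ (n : ℕ) : fc (n+1) = fc n + pf (n+1) := Finset.sum_range_succ _ _

lemma fc_even (m : ℕ) : fc (2*m) = m/2 + fc m := by
  induction m with
  | zero => simp [fc]
  | succ m ih =>
    have e1 : 2*(m+1) = (2*m+1)+1 := by ring
    rw [e1, fc_succ]
    have e2 : 2*m+1 = (2*m)+1 := by ring
    rw [e2, fc_succ, ih]
    have e3 : 2*m+1+1 = 2*(m+1) := by ring
    rw [e3, pf_even _ (by omega), fc_succ]
    have := pf_odd m
    omega

lemma fc_rec (N : ℕ) : fc N = (N+1)/4 + fc (N/2) := by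
  rcases Nat.even_or_odd N with ⟨m, hm⟩ | ⟨m, hm⟩
  · subst hm
    have : m + m = 2*m := by ring
    rw [this, fc_even]
    have : 2*m/2 = m := by omega
    rw [this]
    omega
  · subst hm
    rw [fc_succ, fc_even]
    have h1 := pf_odd m
    have : (2*m+1)/2 = m := by omega
    rw [this]
    omega


def W : ℕ → ℕ
  | 0 => 0
  | 1 => 1
  | (n+2) =>
    if h0 : (n+2) % 4 = 0 then W ((n+2)/2)
    else if h1 : (n+2) % 4 = 1 then max (1 + W ((n+2)/2)) (W ((n+2)/2+1))
    else if h2 : (n+2) % 4 = 2 then 1 + W ((n+2)/2)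
    else max (1 + W ((n+2)/2+1)) (W ((n+2)/2))
decreasing_by all_goals omega

lemma W0 : W 0 = 0 := by simp [W]
lemma W1 : W 1 = 1 := by simp [W]

lemma Weq (m : ℕ) : W (m+2) =
    if (m+2) % 4 = 0 then W ((m+2)/2)
    else if (m+2) % 4 = 1 then max (1 + W ((m+2)/2)) (W ((m+2)/2+1))
    else if (m+2) % 4 = 2 then 1 + W ((m+2)/2)
    else max (1 + W ((m+2)/2+1)) (W ((m+2)/2)) := by
  have h4 : (m+2) % 4 = 0 ∨ (m+2) % 4 = 1 ∨ (m+2) % 4 = 2 ∨ (m+2) % 4 = 3 := by omega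
  rw [W]
  rcases h4 with h | h | h | h <;> simp [h]

lemma WA (n : ℕ) (h : n % 4 = 0) : W n = W (n/2) := by
  rcases Nat.lt_or_ge n 2 with hn | hn
  · interval_cases n <;> simp_all [W0]
  · obtain ⟨m, rfl⟩ : ∃ m, n = m + 2 := ⟨n - 2, by omega⟩
    rw [Weq, if_pos h]

lemma WB (n : ℕ) (h : n % 4 = 1) : W n = max (1 + W (n/2)) (W (n/2+1)) := by
  rcases Nat.lt_or_ge n 2 with hn | hn
  · interval_cases n <;> simp_all [W0, W1]
  · obtain ⟨m, rfl⟩ : ∃ m, n = m + 2 := ⟨n - 2, by omega⟩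
    rw [Weq, if_neg (by omega), if_pos h]

lemma WC (n : ℕ) (h : n % 4 = 2) : W n = 1 + W (n/2) := by
  obtain ⟨m, rfl⟩ : ∃ m, n = m + 2 := ⟨n - 2, by omega⟩
  rw [Weq, if_neg (by omega), if_neg (by omega), if_pos h]

lemma WD (n : ℕ) (h : n % 4 = 3) : W n = max (1 + W (n/2+1)) (W (n/2)) := by
  obtain ⟨m, rfl⟩ : ∃ m, n = m + 2 := ⟨n - 2, by omega⟩
  rw [Weq, if_neg (by omega), if_neg (by omega), if_neg (by omega)]

lemma W2 : W 2 = 2 := by rw [WC 2 rfl]; norm_num [W1]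
lemma W3 : W 3 = 3 := by rw [WD 3 rfl]; norm_num [W1, W2]
lemma W4 : W 4 = 2 := by rw [WA 4 rfl]; norm_num [W2]
lemma W5 : W 5 = 3 := by rw [WB 5 rfl]; norm_num [W2, W3]
lemma W6 : W 6 = 4 := by rw [WC 6 rfl]; norm_num [W3]
lemma W7 : W 7 = 3 := by rw [WD 7 rfl]; norm_num [W3, W4]
lemma W8 : W 8 = 2 := by rw [WA 8 rfl]; norm_num [W4]
lemma W9 : W 9 = 3 := by rw [WB 9 rfl]; norm_num [W4, W5]

lemma Wstep (n : ℕ) : W n ≤ 1 + max (W (n/2)) (W ((n+1)/2)) := by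
  have hmax1 := le_max_left (W (n/2)) (W ((n+1)/2))
  have hmax2 := le_max_right (W (n/2)) (W ((n+1)/2))
  have h4 : n % 4 = 0 ∨ n % 4 = 1 ∨ n % 4 = 2 ∨ n % 4 = 3 := by omega
  rcases h4 with h | h | h | h
  · rw [WA n h]; omega
  · rcases Nat.lt_or_ge n 2 with hn | hn
    · interval_cases n <;> simp [W0, W1]
    · have e : (n+1)/2 = n/2 + 1 := by omega
      rw [WB n h, e]
      rw [e] at hmax2
      exact max_le (by omega) (by omega)
  · rw [WC n h]
    omega
  · have e : (n+1)/2 = n/2 + 1 := by omega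
    rw [WD n h, e]
    rw [e] at hmax2
    exact max_le (by omega) (by omega)

lemma G (n : ℕ) : ∀ j, 2 * fc (j+n) ≤ 2 * fc j + n + W n ∧ 2 * fc j + n ≤ 2 * fc (j+n) + W n := by
  induction n using Nat.strong_induction_on with
  | _ n IH =>
  intro j
  rcases Nat.lt_or_ge n 2 with hn | hn
  · interval_cases n
    · simp [W0]
    · have h1 := fc_succ j
      have h2 := pf_zero_or_one (j+1)
      have h3 := W1
      omega
  · have hfa : fc (j+n) = (j+n+1)/4 + fc ((j+n)/2) := fc_rec _
    have hfb : fc j = (j+1)/4 + fc (j/2) := fc_rec _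
    have h4 : n % 4 = 0 ∨ n % 4 = 1 ∨ n % 4 = 2 ∨ n % 4 = 3 := by omega
    rcases h4 with h | h | h | h
    · have e : (j+n)/2 = j/2 + n/2 := by omega
      have hW := WA n h
      have hIH := IH (n/2) (by omega) (j/2)
      rw [hfa, hfb, e]
      omega
    · by_cases hj : j % 2 = 0
      · have e : (j+n)/2 = j/2 + n/2 := by omega
        have hW1 : 1 + W (n/2) ≤ W n := by rw [WB n h]; exact le_max_left _ _
        have hIH := IH (n/2) (by omega) (j/2)
        rw [hfa, hfb, e]
        omega
      · have e : (j+n)/2 = j/2 + (n/2+1) := by omega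
        have hW2 : W (n/2+1) ≤ W n := by rw [WB n h]; exact le_max_right _ _
        have hIH := IH (n/2+1) (by omega) (j/2)
        rw [hfa, hfb, e]
        omega
    · have e : (j+n)/2 = j/2 + n/2 := by omega
      have hW := WC n h
      have hIH := IH (n/2) (by omega) (j/2)
      rw [hfa, hfb, e]
      omega
    · by_cases hj : j % 2 = 0
      · have e : (j+n)/2 = j/2 + n/2 := by omega
        have hW : W (n/2) ≤ W n := by rw [WD n h]; exact le_max_right _ _
        have hIH := IH (n/2) (by omega) (j/2)
        rw [hfa, hfb, e]
        omega
      · have e : (j+n)/2 = j/2 + (n/2+1) := by omega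
        have hW : 1 + W (n/2+1) ≤ W n := by rw [WD n h]; exact le_max_left _ _
        have hIH := IH (n/2+1) (by omega) (j/2)
        rw [hfa, hfb, e]
        omega


lemma p2e (k : ℕ) (hk : 1 ≤ k) : (2:ℕ)^k = 2 * 2^(k-1) := by
  have h := pow_succ 2 (k-1)
  rw [Nat.sub_add_cancel hk] at h
  omega

lemma K0 : ∀ k, 1 ≤ k → W (2^k) ≤ 2 := by
  intro k hk
  induction k, hk using Nat.le_induction with
  | base => norm_num [W2]
  | succ k hk IH =>
    have e1 : (2:ℕ)^(k+1) = 2*2^k := by rw [pow_succ]; ring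
    have e2 := p2e k hk
    have hp : 0 < 2^(k-1) := pow_pos (by norm_num) _
    rw [WA _ (by omega), show 2^(k+1)/2 = 2^k from by omega]
    exact IH

lemma K1 : ∀ k, 1 ≤ k → W (2^k + 1) ≤ 3 := by
  intro k hk
  induction k, hk using Nat.le_induction with
  | base => norm_num [W3]
  | succ k hk IH =>
    have e1 : (2:ℕ)^(k+1) = 2*2^k := by rw [pow_succ]; ring
    have e2 := p2e k hk
    have hp : 0 < 2^(k-1) := pow_pos (by norm_num) _
    rw [WB _ (by omega), show (2^(k+1)+1)/2 = 2^k from by omega]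
    exact max_le (by have := K0 k hk; omega) (by have := IH; omega)

lemma Km1 : ∀ k, 1 ≤ k → W (2^k - 1) ≤ 3 := by
  intro k hk
  induction k, hk using Nat.le_induction with
  | base => norm_num [W1]
  | succ k hk IH =>
    have e1 : (2:ℕ)^(k+1) = 2*2^k := by rw [pow_succ]; ring
    have e2 := p2e k hk
    have hp : 0 < 2^(k-1) := pow_pos (by norm_num) _
    rw [WD _ (by omega), show (2^(k+1)-1)/2 = 2^k - 1 from by omega,
      show 2^k - 1 + 1 = 2^k from by omega]
    exact max_le (by have := K0 k hk; omega) (by have := IH; omega)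

lemma K2 : ∀ k, 1 ≤ k → W (2^k + 2) ≤ 4 := by
  intro k hk
  rcases Nat.lt_or_ge k 2 with h | h
  · interval_cases k
    norm_num [W4]
  · have e1 := p2e k (by omega)
    have e2 := p2e (k-1) (by omega)
    norm_num [Nat.sub_sub] at e2
    have hp : 0 < 2^(k-2) := pow_pos (by norm_num) _
    rw [WC _ (by omega), show (2^k+2)/2 = 2^(k-1) + 1 from by omega]
    have := K1 (k-1) (by omega)
    omega

lemma Km2 : ∀ k, 1 ≤ k → W (2^k - 2) ≤ 4 := by
  intro k hk
  rcases Nat.lt_or_ge k 2 with h | h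
  · interval_cases k
    norm_num [W0]
  · have e1 := p2e k (by omega)
    have e2 := p2e (k-1) (by omega)
    norm_num [Nat.sub_sub] at e2
    have hp : 0 < 2^(k-2) := pow_pos (by norm_num) _
    rw [WC _ (by omega), show (2^k-2)/2 = 2^(k-1) - 1 from by omega]
    have := Km1 (k-1) (by omega)
    omega

lemma K3 : ∀ k, 1 ≤ k → W (2^k + 3) ≤ 5 := by
  intro k hk
  rcases Nat.lt_or_ge k 2 with h | h
  · interval_cases k
    norm_num [W5]
  · have e1 := p2e k (by omega)
    have e2 := p2e (k-1) (by omega)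
    norm_num [Nat.sub_sub] at e2
    have hp : 0 < 2^(k-2) := pow_pos (by norm_num) _
    rw [WD _ (by omega), show (2^k+3)/2 = 2^(k-1) + 1 from by omega,
      show 2^(k-1) + 1 + 1 = 2^(k-1) + 2 from by omega]
    have h1 := K2 (k-1) (by omega)
    have h2 := K1 (k-1) (by omega)
    exact max_le (by omega) (by omega)

lemma Km3 : ∀ k, 1 ≤ k → W (2^k - 3) ≤ 5 := by
  intro k hk
  rcases Nat.lt_or_ge k 3 with h | h
  · interval_cases k
    · norm_num [W0]
    · norm_num [W1]
  · have e1 := p2e k (by omega)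
    have e2 := p2e (k-1) (by omega)
    norm_num [Nat.sub_sub] at e2
    have hp : 0 < 2^(k-2) := pow_pos (by norm_num) _
    rw [WB _ (by omega), show (2^k-3)/2 = 2^(k-1) - 2 from by omega,
      show 2^(k-1) - 2 + 1 = 2^(k-1) - 1 from by omega]
    have h1 := Km2 (k-1) (by omega)
    have h2 := Km1 (k-1) (by omega)
    exact max_le (by omega) (by omega)

lemma K4 : ∀ k, 1 ≤ k → W (2^k + 4) ≤ 4 := by
  intro k hk
  rcases Nat.lt_or_ge k 2 with h | h
  · interval_cases k
    norm_num [W6]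
  · have e1 := p2e k (by omega)
    have e2 := p2e (k-1) (by omega)
    norm_num [Nat.sub_sub] at e2
    have hp : 0 < 2^(k-2) := pow_pos (by norm_num) _
    rw [WA _ (by omega), show (2^k+4)/2 = 2^(k-1) + 2 from by omega]
    exact K2 (k-1) (by omega)

lemma Km4 : ∀ k, 1 ≤ k → W (2^k - 4) ≤ 4 := by
  intro k hk
  rcases Nat.lt_or_ge k 2 with h | h
  · interval_cases k
    norm_num [W0]
  · have e1 := p2e k (by omega)
    have e2 := p2e (k-1) (by omega)
    norm_num [Nat.sub_sub] at e2
    have hp : 0 < 2^(k-2) := pow_pos (by norm_num) _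
    rw [WA _ (by omega), show (2^k-4)/2 = 2^(k-1) - 2 from by omega]
    exact Km2 (k-1) (by omega)

lemma K5 : ∀ k, 1 ≤ k → W (2^k + 5) ≤ 5 := by
  intro k hk
  rcases Nat.lt_or_ge k 2 with h | h
  · interval_cases k
    norm_num [W7]
  · have e1 := p2e k (by omega)
    have e2 := p2e (k-1) (by omega)
    norm_num [Nat.sub_sub] at e2
    have hp : 0 < 2^(k-2) := pow_pos (by norm_num) _
    rw [WB _ (by omega), show (2^k+5)/2 = 2^(k-1) + 2 from by omega,
      show 2^(k-1) + 2 + 1 = 2^(k-1) + 3 from by omega]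
    have h1 := K2 (k-1) (by omega)
    have h2 := K3 (k-1) (by omega)
    exact max_le (by omega) (by omega)

lemma Km5 : ∀ k, 1 ≤ k → W (2^k - 5) ≤ 5 := by
  intro k hk
  rcases Nat.lt_or_ge k 3 with h | h
  · interval_cases k
    · norm_num [W0]
    · norm_num [W0]
  · have e1 := p2e k (by omega)
    have e2 := p2e (k-1) (by omega)
    norm_num [Nat.sub_sub] at e2
    have e3 := p2e (k-2) (by omega)
    norm_num [Nat.sub_sub] at e3
    have hp : 0 < 2^(k-3) := pow_pos (by norm_num) _
    rw [WD _ (by omega), show (2^k-5)/2 = 2^(k-1) - 3 from by omega,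
      show 2^(k-1) - 3 + 1 = 2^(k-1) - 2 from by omega]
    have h1 := Km2 (k-1) (by omega)
    have h2 := Km3 (k-1) (by omega)
    exact max_le (by omega) (by omega)

lemma S : ∀ s k n, s + 1 ≤ k → 2^k ≤ n + 2^s → n ≤ 2^k + 2^s → W n ≤ 2*s + 3 := by
  intro s
  induction s with
  | zero =>
    intro k n hk h1 h2
    have e1 := p2e k (by omega)
    have hp : 0 < 2^(k-1) := pow_pos (by norm_num) _
    rcases (by omega : n + 1 = 2^k ∨ n = 2^k ∨ n = 2^k + 1) with h | h | h
    · rw [show n = 2^k - 1 from by omega]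
      have := Km1 k (by omega); omega
    · rw [h]
      have := K0 k (by omega); omega
    · rw [h]
      have := K1 k (by omega); omega
  | succ s IH =>
    intro k n hk h1 h2
    have e1 := p2e k (by omega)
    have hp : 0 < 2^(k-1) := pow_pos (by norm_num) _
    have hps : 0 < 2^s := pow_pos (by norm_num) _
    have es := pow_succ 2 s
    rcases Nat.lt_or_ge n 2 with hn | hn
    · interval_cases n
      · simp [W0]
      · simp [W1]
    · have hstep := Wstep n
      have hI1 := IH (k-1) (n/2) (by omega) (by omega) (by omega)
      have hI2 := IH (k-1) ((n+1)/2) (by omega) (by omega) (by omega)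
      have hm : max (W (n/2)) (W ((n+1)/2)) ≤ 2*s+3 := max_le hI1 hI2
      omega

lemma size_le_self (x : ℕ) : Nat.size x ≤ x := by
  rcases Nat.eq_zero_or_pos x with h | h
  · simp [h]
  · exact Nat.size_le.mpr (Nat.lt_two_pow_self (n := x))

lemma pow_lin : ∀ t, 3 ≤ t → 2*t + 2 ≤ 2^t := by
  intro t ht
  induction t, ht using Nat.le_induction with
  | base => norm_num
  | succ t ht IH =>
    have e := pow_succ 2 t
    omega

lemma two_size_le (x : ℕ) (hx : 6 ≤ x) : 2 * Nat.size x ≤ x := by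
  have h1 := pow_lin (x/2) (by omega)
  have h2 : x < 2^(x/2) := by omega
  have := Nat.size_le.mpr h2
  omega

lemma Glog (n : ℕ) : W n ≤ 2 * Nat.size n + 1 := by
  rcases Nat.lt_or_ge n 2 with hn | hn
  · interval_cases n
    · simp [W0]
    · simp [W1]
  · set K := Nat.size n with hK
    have hK2 : 2 ≤ K := by
      by_contra h
      have h1 : Nat.size n ≤ 1 := by omega
      have := Nat.size_le.mp h1
      norm_num at this
      omega
    have hlt : n < 2^K := Nat.lt_size_self n
    have hge : 2^(K-1) ≤ n := by
      by_contra h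
      have := Nat.size_le.mpr (by omega : n < 2^(K-1))
      omega
    have e1 := p2e K (by omega)
    have e2 := p2e (K-1) (by omega)
    norm_num [Nat.sub_sub] at e2
    have hp : 0 < 2^(K-2) := pow_pos (by norm_num) _
    by_cases hc : n ≤ 2^(K-1) + 2^(K-2)
    · have := S (K-2) (K-1) n (by omega) (by omega) hc
      omega
    · have := S (K-1) K n (by omega) (by omega) (by omega)
      omega


lemma factorAt_succ (w : ℕ → ℕ) (i n : ℕ) :
    factorAt w i (n+1) = factorAt w i n ++ [w (i+n)] := by
  unfold factorAt
  rw [List.range_succ, List.map_append]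
  rfl

lemma count_factor (i' n : ℕ) :
    (factorAt pf (i'+1) n).count 1 + fc i' = fc (i'+n) ∧
    (factorAt pf (i'+1) n).count 0 + (factorAt pf (i'+1) n).count 1 = n := by
  induction n with
  | zero => simp [factorAt, fc]
  | succ n ih =>
    rw [factorAt_succ, List.count_append, List.count_append]
    have hfc : fc (i' + (n+1)) = fc (i'+n) + pf (i'+n+1) := by
      rw [show i' + (n+1) = (i'+n)+1 from by omega, fc_succ]
    have e : i' + 1 + n = i' + n + 1 := by omega
    rw [e]
    rcases pf_zero_or_one (i'+n+1) with h | h <;> rw [h] <;> simp <;> omega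

lemma tail_bound (b r : ℕ) (hb : 5 ≤ b) :
    b*(2*Nat.size b + 2*(2*b+10+r) + 9) < 3*2^(2*b+10+r) := by
  have h1 : b + 1 ≤ 2^b := Nat.lt_two_pow_self (n := b)
  have h2 : r + 1 ≤ 2^r := Nat.lt_two_pow_self (n := r)
  have hsb : Nat.size b ≤ b := size_le_self b
  have e : (2:ℕ)^(2*b+10+r) = 2^b * 2^b * 2^r * 1024 := by
    rw [show 2*b+10+r = b + b + r + 10 from by omega, pow_add, pow_add, pow_add]
    norm_num
  rw [e]
  have c2 : (b+1)*((b+1)*(r+1)) ≤ 2^b*(2^b*2^r) := Nat.mul_le_mul h1 (Nat.mul_le_mul h1 h2)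
  have hZpos : 0 < b*(b*(r+1)) := Nat.mul_pos (by omega) (Nat.mul_pos (by omega) (by omega))
  have hZle : b*(b*(r+1)) ≤ (b+1)*((b+1)*(r+1)) :=
    Nat.mul_le_mul (by omega) (Nat.mul_le_mul (by omega) le_rfl)
  calc b*(2*Nat.size b + 2*(2*b+10+r) + 9)
      ≤ b*(6*b + 2*r + 29) := Nat.mul_le_mul_left b (by omega)
    _ ≤ b*(35*(b*(r+1))) := Nat.mul_le_mul_left b (by
        have hbr : r ≤ b*r := Nat.le_mul_of_pos_left r (by omega)
        have e2 : 35*(b*(r+1)) = 35*b + 35*(b*r) := by ring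
        omega)
    _ = 35*(b*(b*(r+1))) := by ring
    _ < 3072*(b*(b*(r+1))) := by omega
    _ ≤ 3072*((b+1)*((b+1)*(r+1))) := Nat.mul_le_mul_left _ hZle
    _ ≤ 3072*(2^b*(2^b*2^r)) := Nat.mul_le_mul_left _ c2
    _ = 3*(2^b * 2^b * 2^r * 1024) := by ring


/-- If `S(0) = a`, `S(1) = b` with `4 ≤ a < b` and `gcd(a,b) = 1`, then the set of
natural numbers not of the form `S(u) = a|u|₀ + b|u|₁` for a factor `u` of the
paperfolding word is infinite. -/
theorem paperfolding_not_frobenius (a b : ℕ) (ha : 4 ≤ a) (hab : a < b)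
    (hco : Nat.Coprime a b) :
    {m : ℕ | ¬ ∃ u : List ℕ, IsFactor pf u ∧ m = a * u.count 0 + b * u.count 1}.Infinite := by
  have hb5 : 5 ≤ b := by omega
  apply Set.infinite_of_injective_forall_mem
    (f := fun r : ℕ => (a+b) * 2^(2*b+10+r) + 2*(b-a))
  case hi =>
    intro r1 r2 h
    have h' : (a+b) * 2^(2*b+10+r1) + 2*(b-a) = (a+b) * 2^(2*b+10+r2) + 2*(b-a) := h
    have hP : (a+b) * 2^(2*b+10+r1) = (a+b) * 2^(2*b+10+r2) := by omega
    have h2 := Nat.eq_of_mul_eq_mul_left (by omega : 0 < a + b) hP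
    have h3 := Nat.pow_right_injective (le_refl 2) h2
    omega
  case hf =>
    intro r
    set K := 2*b + 10 + r with hKdef
    simp only [Set.mem_setOf_eq]
    rintro ⟨u, ⟨i, hi1, hu⟩, hm⟩
    obtain ⟨i', rfl⟩ : ∃ i', i = i' + 1 := ⟨i - 1, by omega⟩
    obtain ⟨hc1, hc0⟩ := count_factor i' u.length
    rw [← hu] at hc1 hc0
    set n := u.length with hn
    set y := u.count 1 with hy
    set x := u.count 0 with hx
    -- window bound
    have hG := G n i'
    have hy1 : 2*y ≤ n + W n := by omega
    have hy2 : n ≤ 2*y + W n := by omega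
    -- integer setup
    set d : ℤ := (n:ℤ) - 2*(y:ℤ) with hd
    have hWd1 : d ≤ (W n : ℤ) := by rw [hd]; omega
    have hWd2 : -(W n : ℤ) ≤ d := by rw [hd]; omega
    clear_value d
    have hm' : (a:ℤ) * x + b * y = ((a:ℤ)+b) * 2^K + 2*((b:ℤ)-a) := by
      have h1 : ((a * x + b * y : ℕ) : ℤ) = (((a+b) * 2^K + 2*(b-a) : ℕ) : ℤ) := by
        rw [← hm]
      push_cast [Nat.cast_sub (le_of_lt hab)] at h1
      linarith
    have hxz : (x:ℤ) = (n:ℤ) - y := by omega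
    have hkey : ((a:ℤ)+b) * ((n:ℤ) - 2*2^K) = ((b:ℤ)-a) * (d + 4) := by
      rw [hd]
      linear_combination (2:ℤ)*hm' - 2*(a:ℤ)*hxz
    -- gcd setup
    set g := Nat.gcd (a+b) (b-a) with hg
    have hgpos : 0 < g := Nat.gcd_pos_of_pos_left _ (by omega)
    have hgle : g ≤ 2 := by
      have d1 : g ∣ (a+b) := Nat.gcd_dvd_left _ _
      have d2 : g ∣ (b-a) := Nat.gcd_dvd_right _ _
      have d3 : g ∣ 2*b := by
        have e : (a+b) + (b-a) = 2*b := by omega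
        exact e ▸ Nat.dvd_add d1 d2
      have d4 : g ∣ 2*a := by
        have e : (a+b) - (b-a) = 2*a := by omega
        exact e ▸ Nat.dvd_sub d1 d2
      have h5 := Nat.dvd_gcd d4 d3
      rw [Nat.gcd_mul_left, hco, mul_one] at h5
      exact Nat.le_of_dvd (by norm_num) h5
    set A := (a+b)/g with hA
    set s := (b-a)/g with hs
    have hAe : g * A = a + b := Nat.mul_div_cancel' (Nat.gcd_dvd_left _ _)
    have hse : g * s = b - a := Nat.mul_div_cancel' (Nat.gcd_dvd_right _ _)
    have hcoAs : Nat.Coprime A s := Nat.coprime_div_gcd_div_gcd hgpos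
    clear_value A s
    -- unified facts
    have hfacts : 1 ≤ s ∧ s ≤ b ∧ 5 ≤ A ∧
        (A = s + 2*a ∨ (A = s + a ∧ a % 2 = 1 ∧ g = 2)) := by
      rcases (by omega : g = 1 ∨ g = 2) with hgv | hgv
      · rw [hgv, one_mul] at hAe hse
        omega
      · rw [hgv] at hAe hse
        have ha2 : a % 2 = 1 := by
          by_contra hpar
          have hda : 2 ∣ a := by omega
          have hdb : 2 ∣ b := ⟨A - a/2, by omega⟩
          have := Nat.dvd_gcd hda hdb
          rw [hco] at this
          norm_num at this
        omega
    obtain ⟨hs1, hsb, hA5, hAform⟩ := hfacts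
    -- divide hkey by g
    have hkey2 : (A:ℤ) * ((n:ℤ) - 2*2^K) = (s:ℤ) * (d + 4) := by
      have hAz : ((a:ℤ)+b) = (g:ℤ) * A := by exact_mod_cast hAe.symm
      have hsz : ((b:ℤ)-a) = (g:ℤ) * s := by
        have : ((g*s : ℕ):ℤ) = ((b-a : ℕ):ℤ) := by rw [hse]
        push_cast [Nat.cast_sub (le_of_lt hab)] at this
        linarith
      rw [hAz, hsz] at hkey
      have hgz : (g:ℤ) ≠ 0 := by exact_mod_cast hgpos.ne'
      apply mul_left_cancel₀ hgz
      linear_combination hkey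
    have hdvd : (A:ℤ) ∣ (d + 4) := by
      have h1 : (A:ℤ) ∣ (s:ℤ) * (d+4) := ⟨(n:ℤ) - 2*2^K, hkey2.symm⟩
      have hcoz : IsCoprime (A:ℤ) (s:ℤ) := by
        rw [Nat.isCoprime_iff_coprime]
        exact hcoAs
      exact hcoz.dvd_of_dvd_mul_left h1
    obtain ⟨j, hj⟩ := hdvd
    have hApos : (0:ℤ) < A := by exact_mod_cast (by omega : 0 < A)
    have hδ : (n:ℤ) - 2*2^K = (s:ℤ) * j := by
      apply mul_left_cancel₀ hApos.ne'
      rw [hkey2, hj]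
      ring
    have hpow : ((2:ℕ)^(K+1) : ℤ) = 2*2^K := by push_cast [pow_succ]; ring
    rcases eq_or_ne j 0 with hj0 | hj0
    · rw [hj0, mul_zero] at hj hδ
      have hn2 : n = 2^(K+1) := by omega
      have hW := K0 (K+1) (by omega)
      rw [← hn2] at hW
      omega
    · set J := j.natAbs with hJ
      have hJ1 : 1 ≤ J := Int.natAbs_pos.mpr hj0
      have habsj : (J:ℤ) = |j| := (Int.abs_eq_natAbs j).symm
      set T := s * J with hT
      have hT1 : 1 ≤ T := Nat.mul_le_mul hs1 hJ1
      clear_value T J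
      have hrange : ((n:ℤ) = 2*2^K + T) ∨ ((n:ℤ) + T = 2*2^K) := by
        have h1 : (s:ℤ) * j = T ∨ (s:ℤ) * j = -(T:ℤ) := by
          rcases le_or_gt 0 j with hjs | hjs
          · left
            rw [hT]
            push_cast
            rw [habsj, abs_of_nonneg hjs]
          · right
            rw [hT]
            push_cast
            rw [habsj, abs_of_neg hjs]
            ring
        rcases h1 with h1 | h1 <;> [left; right] <;> omega
      -- |d| ≥ T + 4
      have hAJd : (A:ℤ) * J ≤ |d| + 4 := by
        have h1 : |d + 4| = (A:ℤ) * J := by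
          rw [hj, abs_mul, abs_of_nonneg (le_of_lt hApos), habsj]
        have h2 := abs_add_le d 4
        rw [h1] at h2
        norm_num at h2
        linarith
      have habs_d : |d| ≤ (W n : ℤ) := abs_le.mpr ⟨hWd2, hWd1⟩
      have hD : (T:ℤ) + 4 ≤ |d| := by
        have hJz : (1:ℤ) ≤ (J:ℤ) := by exact_mod_cast hJ1
        have hTz : (T:ℤ) = (s:ℤ) * J := by rw [hT]; push_cast; ring
        have haz : (4:ℤ) ≤ (a:ℤ) := by exact_mod_cast ha
        rcases hAform with hcase | ⟨hcase, hodd, hgv2⟩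
        · have hAz : (A:ℤ) = (s:ℤ) + 2*(a:ℤ) := by exact_mod_cast hcase
          have h8 : (4:ℤ) ≤ (a:ℤ)*(J:ℤ) := by
            calc (4:ℤ) = 4*1 := by ring
              _ ≤ (a:ℤ)*(J:ℤ) := mul_le_mul haz hJz (by norm_num) (by positivity)
          have hAJ : (A:ℤ)*(J:ℤ) = (T:ℤ) + 2*((a:ℤ)*(J:ℤ)) := by rw [hAz, hTz]; ring
          linarith [hAJd]
        · -- parity: j is even
          have hAz : (A:ℤ) = (s:ℤ) + (a:ℤ) := by exact_mod_cast hcase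
          have heven : (2:ℤ) ∣ (a:ℤ) * j := by
            refine ⟨2 + 2^K - (y:ℤ), ?_⟩
            linear_combination (-1:ℤ)*hj + hδ + (-j)*hAz + hd
          have hjeven : Even j := by
            rcases (Int.even_mul).mp ((even_iff_two_dvd).mpr heven) with he | he
            · exfalso
              rcases he with ⟨c, hc⟩
              omega
            · exact he
          have hJ2 : 2 ≤ J := by
            rcases hjeven with ⟨c, hc⟩
            omega
          have hJz2 : (2:ℤ) ≤ (J:ℤ) := by exact_mod_cast hJ2
          have h8 : (8:ℤ) ≤ (a:ℤ)*(J:ℤ) := by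
            calc (8:ℤ) = 4*2 := by ring
              _ ≤ (a:ℤ)*(J:ℤ) := mul_le_mul haz hJz2 (by norm_num) (by positivity)
          have hAJ : (A:ℤ)*(J:ℤ) = (T:ℤ) + (a:ℤ)*(J:ℤ) := by rw [hAz, hTz]; ring
          linarith [hAJd]
      have hWnN : T + 4 ≤ W n := by
        have : (T:ℤ) + 4 ≤ (W n : ℤ) := le_trans hD habs_d
        exact_mod_cast this
      rcases Nat.lt_or_ge T 6 with hTsmall | hTbig6
      · -- T ∈ [1,5]
        rcases hrange with hr | hr
        · have hnn : n = 2^(K+1) + T := by omega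
          rw [hnn] at hWnN
          interval_cases T
          · have := K1 (K+1) (by omega); omega
          · have := K2 (K+1) (by omega); omega
          · have := K3 (K+1) (by omega); omega
          · have := K4 (K+1) (by omega); omega
          · have := K5 (K+1) (by omega); omega
        · have hnn : n = 2^(K+1) - T := by omega
          rw [hnn] at hWnN
          interval_cases T
          · have := Km1 (K+1) (by omega); omega
          · have := Km2 (K+1) (by omega); omega
          · have := Km3 (K+1) (by omega); omega
          · have := Km4 (K+1) (by omega); omega
          · have := Km5 (K+1) (by omega); omega
      · -- T ≥ 6
        by_cases hσ : Nat.size T + 1 ≤ K + 1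
        · have hTlt : T < 2^(Nat.size T) := Nat.lt_size_self T
          have hS := S (Nat.size T) (K+1) n hσ (by omega) (by omega)
          have h2s := two_size_le T hTbig6
          omega
        · have hTbig : 2^K ≤ T := by
            by_contra h
            have hKp : 0 < 2^K := pow_pos (by norm_num) K
            have := Nat.size_le.mpr (by omega : T < 2^K)
            omega
          have hsJb : s * J ≤ b * J := Nat.mul_le_mul_right _ hsb
          have hbJ : 2^K ≤ b * J := by omega
          have h5J : 5*J ≤ W n + 4 := by
            have h1 : (A:ℤ)*J ≤ (W n : ℤ) + 4 := by
              linarith [hAJd, habs_d]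
            have hJz : (0:ℤ) ≤ (J:ℤ) := by positivity
            have hA5z : (5:ℤ) ≤ (A:ℤ) := by exact_mod_cast hA5
            have h2 : (5:ℤ)*(J:ℤ) ≤ (A:ℤ)*(J:ℤ) := mul_le_mul_of_nonneg_right hA5z hJz
            exact_mod_cast le_trans h2 h1
          have hnle : n ≤ 2^(K+1) + b*J := by
            rcases hrange with hr | hr <;> omega
          have hmul1 : 2^(K+1) + b*J ≤ 2^(K+1) * (b*J+1) := by
            have h1 : b*J ≤ 2^(K+1) * (b*J) := Nat.le_mul_of_pos_left _ (pow_pos (by norm_num) _)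
            have h2 : 2^(K+1) * (b*J+1) = 2^(K+1)*(b*J) + 2^(K+1) := by ring
            omega
          have hsz1 : Nat.size n ≤ Nat.size (2^(K+1) * (b*J+1)) :=
            Nat.size_le_size (le_trans hnle hmul1)
          have hsz2 : Nat.size (2^(K+1) * (b*J+1)) = Nat.size (b*J+1) + (K+1) := by
            rw [mul_comm, ← Nat.shiftLeft_eq, Nat.size_shiftLeft (by omega)]
          have hszmul : Nat.size (b*J+1) ≤ Nat.size b + Nat.size J + 1 := by
            apply Nat.size_le.mpr
            have h1 : b < 2^(Nat.size b) := Nat.lt_size_self b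
            have h2 : J < 2^(Nat.size J) := Nat.lt_size_self J
            have h3 : b*J < 2^(Nat.size b) * 2^(Nat.size J) :=
              mul_lt_mul'' h1 h2 (Nat.zero_le _) (Nat.zero_le _)
            have e : (2:ℕ)^(Nat.size b + Nat.size J + 1) = 2^(Nat.size b) * 2^(Nat.size J) * 2 := by
              rw [pow_add, pow_add, pow_one]
            rw [e]
            have hP1 : 0 < 2^(Nat.size b) * 2^(Nat.size J) := by positivity
            linarith
          have hsn : Nat.size n ≤ Nat.size b + Nat.size J + K + 2 := by omega
          have hGl := Glog n
          have hsJJ := size_le_self J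
          have hJineq : 3*J ≤ 2*Nat.size b + 2*K + 9 := by omega
          have hmul : 3*(b*J) ≤ b*(2*Nat.size b + 2*K + 9) := by
            calc 3*(b*J) = b*(3*J) := by ring
              _ ≤ b*(2*Nat.size b + 2*K + 9) := Nat.mul_le_mul_left b hJineq
          have hbig : b*(2*Nat.size b + 2*(2*b+10+r) + 9) < 3*2^(2*b+10+r) := tail_bound b r hb5
          rw [← hKdef] at hbig
          omega
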